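/- A finite group G satisfies Φ(G/N) = Φ(G)N/N for all normal subgroups N of G if and only if G/Φ(G) has no Frattini chief factors (i.e., every quotient of G/Φ(G) has trivial Frattini subgroup). -/

import Mathlib

open Subgroup

/-- A subgroup `H` of `G` is subnormal if there is a chain of subgroups from `H` to `G`,
each normal in the next. -/
def IsSubnormal {G : Type*} [Group G] (H : Subgroup G) : Prop :=
  ∃ (n : ℕ) (c : ℕ → Subgroup G), c 0 = H ∧ c n = ⊤ ∧
    ∀ i, c i ≤ c (i + 1) ∧ ((c i).subgroupOf (c (i + 1))).Normal

/-- A group is quasi-simple if it is perfect and its central quotient is simple. -/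
def IsQuasiSimple (Q : Type*) [Group Q] : Prop :=
  commutator Q = ⊤ ∧ IsSimpleGroup (Q ⧸ Subgroup.center Q)

/-- A component of `G` is a subnormal quasi-simple subgroup. -/
def IsComponent {G : Type*} [Group G] (Q : Subgroup G) : Prop :=
  _root_.IsSubnormal Q ∧ IsQuasiSimple Q

/-- The layer `E(G)`: the subgroup generated by all components of `G`. -/
def layer (G : Type*) [Group G] : Subgroup G :=
  Subgroup.closure {x | ∃ Q : Subgroup G, IsComponent Q ∧ x ∈ Q}

/-- The Fitting subgroup `F(G)`: the subgroup generated by all nilpotent normal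
subgroups of `G`. -/
def fitting (G : Type*) [Group G] : Subgroup G :=
  Subgroup.normalClosure {x | ∃ N : Subgroup G, N.Normal ∧ Group.IsNilpotent N ∧ x ∈ N}

/-- The generalised Fitting subgroup `F*(G) = F(G) E(G)`. -/
def genFitting (G : Type*) [Group G] : Subgroup G := fitting G ⊔ layer G

/-- `N` is a minimal normal subgroup of `G`. -/
def IsMinimalNormal {G : Type*} [Group G] (N : Subgroup G) : Prop :=
  N.Normal ∧ N ≠ ⊥ ∧ ∀ M : Subgroup G, M.Normal → M ≤ N → M ≠ ⊥ → M = N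

/-- The socle of `G`: the subgroup generated by all minimal normal subgroups of `G`. -/
def socle (G : Type*) [Group G] : Subgroup G :=
  Subgroup.closure {x | ∃ N : Subgroup G, IsMinimalNormal N ∧ x ∈ N}

/-- `Soc(Z(G))`, viewed as a subgroup of `G`. -/
def centerSocle (G : Type*) [Group G] : Subgroup G :=
  (socle (Subgroup.center G)).map (Subgroup.center G).subtype

/-- The class `B` of groups all of whose quotients have trivial Frattini subgroup. -/
def classB (G : Type*) [Group G] : Prop :=
  ∀ (N : Subgroup G) [N.Normal], frattini (G ⧸ N) = ⊥


section Aux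
variable {G H : Type*} [Group G] [Group H]

lemma frattini_map_mulEquiv (e : G ≃* H) :
    (frattini G).map e.toMonoidHom = frattini H := by
  apply le_antisymm
  · exact map_le_iff_le_comap.2 (frattini_le_comap_frattini_of_surjective e.surjective)
  · have h := frattini_le_comap_frattini_of_surjective
      (φ := e.symm.toMonoidHom) e.symm.surjective
    rw [Subgroup.map_equiv_eq_comap_symm']
    exact h

lemma frattini_eq_bot_of_mulEquiv (e : G ≃* H) (h : frattini H = ⊥) :
    frattini G = ⊥ := by
  have := frattini_map_mulEquiv e.symm
  rw [h] at this
  rw [← this, Subgroup.map_bot]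

end Aux

/-- `Φ(G/N) = Φ(G)N/N` for all `N ⊴ G` iff `G/Φ(G)` has no Frattini chief factors. -/
theorem stmt_17 (G : Type*) [Group G] [Finite G] :
    (∀ (N : Subgroup G) [N.Normal],
        frattini (G ⧸ N) = (frattini G).map (QuotientGroup.mk' N)) ↔
      classB (G ⧸ frattini G) := by
  constructor
  · intro h Nbar _
    set N : Subgroup G := Nbar.comap (QuotientGroup.mk' (frattini G)) with hN
    haveI : N.Normal := Subgroup.Normal.comap inferInstance _
    have hle : frattini G ≤ N := by
      intro x hx
      show QuotientGroup.mk' (frattini G) x ∈ Nbar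
      have hx1 : QuotientGroup.mk' (frattini G) x = 1 := by
        rw [← MonoidHom.mem_ker, QuotientGroup.ker_mk']
        exact hx
      rw [hx1]
      exact Nbar.one_mem
    have hNbar : Nbar = N.map (QuotientGroup.mk' (frattini G)) :=
      (Subgroup.map_comap_eq_self_of_surjective
        (QuotientGroup.mk'_surjective (frattini G)) Nbar).symm
    have hbot : frattini (G ⧸ N) = ⊥ := by
      rw [h N, Subgroup.map_eq_bot_iff, QuotientGroup.ker_mk']
      exact hle
    haveI : (N.map (QuotientGroup.mk' (frattini G))).Normal := hNbar ▸ inferInstance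
    have e : (G ⧸ frattini G) ⧸ Nbar ≃* G ⧸ N :=
      (QuotientGroup.quotientMulEquivOfEq hNbar).trans
        (QuotientGroup.quotientQuotientEquivQuotient (frattini G) N hle)
    exact frattini_eq_bot_of_mulEquiv e hbot
  · intro hB N _
    apply le_antisymm
    swap
    · exact map_le_iff_le_comap.2
        (frattini_le_comap_frattini_of_surjective (QuotientGroup.mk'_surjective N))
    · set L : Subgroup G := frattini G ⊔ N with hL
      haveI : L.Normal := Subgroup.sup_normal _ _
      have hfl : frattini G ≤ L := le_sup_left
      have hNL : N ≤ L := le_sup_right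
      -- frattini (G ⧸ L) = ⊥
      have hGL : frattini (G ⧸ L) = ⊥ := by
        have e := QuotientGroup.quotientQuotientEquivQuotient (frattini G) L hfl
        exact frattini_eq_bot_of_mulEquiv e.symm
          (hB (L.map (QuotientGroup.mk' (frattini G))))
      set K : Subgroup (G ⧸ N) := L.map (QuotientGroup.mk' N) with hK
      haveI : K.Normal := Subgroup.Normal.map inferInstance _
        (QuotientGroup.mk'_surjective N)
      have e2 := QuotientGroup.quotientQuotientEquivQuotient N L hNL
      have hKbot : frattini ((G ⧸ N) ⧸ K) = ⊥ :=
        frattini_eq_bot_of_mulEquiv e2 hGL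
      have step : frattini (G ⧸ N) ≤ K := by
        have h2 := frattini_le_comap_frattini_of_surjective
          (QuotientGroup.mk'_surjective K)
        rwa [hKbot, MonoidHom.comap_bot, QuotientGroup.ker_mk'] at h2
      have hKeq : K = (frattini G).map (QuotientGroup.mk' N) := by
        have hNb : N.map (QuotientGroup.mk' N) = ⊥ :=
          (Subgroup.map_eq_bot_iff _).2 (le_of_eq (QuotientGroup.ker_mk' N).symm)
        rw [hK, hL, Subgroup.map_sup, hNb, sup_bot_eq]
      rwa [hKeq] at step
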